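/- Let B be a commutative ring, b ∈ B, and B̄ = B[z]/(z²−b). The B-algebra homomorphism ψ : B[u,v]/(u²−bv²) → B̄[t] defined by u ↦ zt, v ↦ t is injective, and its image is exactly the set of elements f ∈ B̄[t] whose constant term lies in B ⊆ B̄. -/

import Mathlib

/-- `B̄ = B[z]/(z² − b)`. -/
abbrev Bbar9 {B : Type*} [CommRing B] (b : B) :=
  AdjoinRoot (Polynomial.X ^ 2 - Polynomial.C b)

/-- The `B`-algebra map `ψ : B[u,v] → B̄[t]` with `u ↦ zt`, `v ↦ t`
(with `X 0 = u`, `X 1 = v`). -/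
noncomputable def psi9 {B : Type*} [CommRing B] (b : B) :
    MvPolynomial (Fin 2) B →ₐ[B] Polynomial (Bbar9 b) :=
  MvPolynomial.aeval
    ![Polynomial.C (AdjoinRoot.root (Polynomial.X ^ 2 - Polynomial.C b)) * Polynomial.X,
      Polynomial.X]

namespace Stmt9Aux

open Polynomial

variable {B : Type*} [CommRing B] (b : B)

noncomputable def z : Bbar9 b := AdjoinRoot.root (X ^ 2 - C b)

lemma qmonic : (X ^ 2 - C b).Monic := Polynomial.monic_X_pow_sub_C b two_ne_zero

lemma zsq : (z b) ^ 2 = algebraMap B (Bbar9 b) b := by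
  have h := AdjoinRoot.eval₂_root (X ^ 2 - C b)
  simpa [z, AdjoinRoot.algebraMap_eq, sub_eq_zero] using h

lemma mk_lin (a c : B) :
    AdjoinRoot.mk (X ^ 2 - C b) (C c * X + C a) =
      algebraMap B (Bbar9 b) a + algebraMap B (Bbar9 b) c * z b := by
  rw [map_add, map_mul, AdjoinRoot.mk_C, AdjoinRoot.mk_C, AdjoinRoot.mk_X,
    AdjoinRoot.algebraMap_eq]
  rw [add_comm]
  rfl

/-- uniqueness of the decomposition `a + c·z`. -/
lemma uniq {a c : B}
    (h : algebraMap B (Bbar9 b) a + algebraMap B (Bbar9 b) c * z b = 0) :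
    a = 0 ∧ c = 0 := by
  rcases subsingleton_or_nontrivial B with hB | hB
  · exact ⟨Subsingleton.elim _ _, Subsingleton.elim _ _⟩
  · have h' : AdjoinRoot.mk (X ^ 2 - C b) (C c * X + C a) = 0 := by
      rw [mk_lin]; exact h
    have hdvd : (X ^ 2 - C b) ∣ (C c * X + C a) := AdjoinRoot.mk_eq_zero.mp h'
    have hzero : (C c * X + C a : B[X]) = 0 := by
      by_contra hne
      have hdeg : (C c * X + C a : B[X]).degree < (X ^ 2 - C b : B[X]).degree := by
        rw [Polynomial.degree_X_pow_sub_C (by norm_num) b]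
        exact lt_of_le_of_lt Polynomial.degree_linear_le (by norm_num)
      exact (qmonic b).not_dvd_of_degree_lt hne hdeg hdvd
    constructor
    · have := congrArg (fun p => Polynomial.coeff p 0) hzero
      simpa using this
    · have := congrArg (fun p => Polynomial.coeff p 1) hzero
      simpa using this

/-- existence of the decomposition `a + c·z`. -/
lemma dec (x : Bbar9 b) :
    ∃ a c : B, x = algebraMap B (Bbar9 b) a + algebraMap B (Bbar9 b) c * z b := by
  rcases subsingleton_or_nontrivial B with hB | hB
  · refine ⟨0, 0, ?_⟩
    have : Subsingleton (Bbar9 b) :=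
      Function.Surjective.subsingleton (AdjoinRoot.mk_surjective)
    exact Subsingleton.elim _ _
  · obtain ⟨p, rfl⟩ := AdjoinRoot.mk_surjective x
    set q : B[X] := X ^ 2 - C b with hq
    have key : p %ₘ q + q * (p /ₘ q) = p := Polynomial.modByMonic_add_div p q
    have hdeg : (p %ₘ q).degree < q.degree := Polynomial.degree_modByMonic_lt p (qmonic b)
    have hdeg1 : (p %ₘ q).degree ≤ 1 := by
      rw [hq, Polynomial.degree_X_pow_sub_C (by norm_num) b] at hdeg
      exact Order.le_of_lt_succ (by exact_mod_cast hdeg)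
    have hr : p %ₘ q = C ((p %ₘ q).coeff 1) * X + C ((p %ₘ q).coeff 0) :=
      Polynomial.eq_X_add_C_of_degree_le_one hdeg1
    refine ⟨(p %ₘ q).coeff 0, (p %ₘ q).coeff 1, ?_⟩
    have hmk : AdjoinRoot.mk q p = AdjoinRoot.mk q (p %ₘ q) := by
      conv_lhs => rw [← key]
      rw [map_add, map_mul, AdjoinRoot.mk_self, zero_mul, add_zero]
    rw [hmk]
    conv_lhs => rw [hr]
    exact mk_lin b _ _

/-- `f + z·t·g` in `B̄[t]`. -/
noncomputable def rep (f g : B[X]) : Polynomial (Bbar9 b) :=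
  f.map (algebraMap B (Bbar9 b)) + C (z b) * (X * g.map (algebraMap B (Bbar9 b)))

lemma rep_coeff_zero (f g : B[X]) :
    (rep b f g).coeff 0 = algebraMap B (Bbar9 b) (f.coeff 0) := by
  simp [rep, Polynomial.coeff_map, Polynomial.mul_coeff_zero]

lemma rep_coeff_succ (f g : B[X]) (n : ℕ) :
    (rep b f g).coeff (n + 1) =
      algebraMap B (Bbar9 b) (f.coeff (n + 1)) +
        algebraMap B (Bbar9 b) (g.coeff n) * z b := by
  simp only [rep, Polynomial.coeff_add, Polynomial.coeff_map, Polynomial.coeff_C_mul,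
    Polynomial.coeff_X_mul]
  ring

lemma rep_eq_zero {f g : B[X]} (h : rep b f g = 0) : f = 0 ∧ g = 0 := by
  constructor
  · ext n
    cases n with
    | zero =>
        have h0 := congrArg (fun p => Polynomial.coeff p 0) h
        simp only [rep_coeff_zero, Polynomial.coeff_zero] at h0
        have := uniq b (a := f.coeff 0) (c := 0) (by simpa using h0)
        simpa using this.1
    | succ n =>
        have h0 := congrArg (fun p => Polynomial.coeff p (n + 1)) h
        simp only [rep_coeff_succ, Polynomial.coeff_zero] at h0
        have := uniq b (a := f.coeff (n + 1)) (c := g.coeff n) h0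
        simpa using this.1
  · ext n
    have h0 := congrArg (fun p => Polynomial.coeff p (n + 1)) h
    simp only [rep_coeff_succ, Polynomial.coeff_zero] at h0
    have := uniq b (a := f.coeff (n + 1)) (c := g.coeff n) h0
    simpa using this.2

/-- lift of `rep f g` to `B[u,v]`. -/
noncomputable def lft (f g : B[X]) : MvPolynomial (Fin 2) B :=
  Polynomial.aeval (MvPolynomial.X 1) f +
    MvPolynomial.X 0 * Polynomial.aeval (MvPolynomial.X 1) g

lemma psi_X0 : psi9 b (MvPolynomial.X 0) = C (z b) * X := by
  simp [psi9, z]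

lemma psi_X1 : psi9 b (MvPolynomial.X 1) = X := by
  simp [psi9]

lemma psi_C (a : B) : psi9 b (MvPolynomial.C a) = C (algebraMap B (Bbar9 b) a) := by
  simp [psi9, Polynomial.algebraMap_apply]

lemma aevalX (f : B[X]) :
    Polynomial.aeval (X : Polynomial (Bbar9 b)) f = f.map (algebraMap B (Bbar9 b)) := by
  induction f using Polynomial.induction_on' with
  | add p q hp hq => simp [hp, hq]
  | monomial n a =>
      simp [Polynomial.aeval_monomial, Polynomial.map_monomial,
        ← Polynomial.C_mul_X_pow_eq_monomial, Polynomial.algebraMap_apply]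

lemma psi_lft (f g : B[X]) : psi9 b (lft f g) = rep b f g := by
  have h1 : psi9 b (Polynomial.aeval (MvPolynomial.X 1) f)
      = f.map (algebraMap B (Bbar9 b)) := by
    rw [← Polynomial.aeval_algHom_apply, psi_X1, aevalX]
  have h2 : psi9 b (Polynomial.aeval (MvPolynomial.X 1) g)
      = g.map (algebraMap B (Bbar9 b)) := by
    rw [← Polynomial.aeval_algHom_apply, psi_X1, aevalX]
  simp only [lft, map_add, map_mul, h1, h2, psi_X0, rep]
  ring

noncomputable def w : MvPolynomial (Fin 2) B :=
  MvPolynomial.X 0 ^ 2 - MvPolynomial.C b * MvPolynomial.X 1 ^ 2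

lemma psi_w : psi9 b (w b) = 0 := by
  have h : psi9 b (w b) = C ((z b) ^ 2 - algebraMap B (Bbar9 b) b) * X ^ 2 := by
    simp only [w, map_sub, map_mul, map_pow, psi_X0, psi_X1, psi_C, map_sub,
      Polynomial.C_pow]
    ring
  rw [h, zsq, sub_self, Polynomial.C_0, zero_mul]

lemma reduce (p : MvPolynomial (Fin 2) B) :
    ∃ f g : B[X], p - lft f g ∈ Ideal.span {w b} := by
  induction p using MvPolynomial.induction_on with
  | C a =>
      refine ⟨Polynomial.C a, 0, ?_⟩
      have h : lft (Polynomial.C a) (0 : B[X]) = MvPolynomial.C a := by simp [lft]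
      rw [h, sub_self]
      exact Ideal.zero_mem _
  | add p q hp hq =>
      obtain ⟨f1, g1, h1⟩ := hp
      obtain ⟨f2, g2, h2⟩ := hq
      refine ⟨f1 + f2, g1 + g2, ?_⟩
      have h : p + q - lft (f1 + f2) (g1 + g2)
          = (p - lft f1 g1) + (q - lft f2 g2) := by
        simp only [lft, map_add]
        ring
      rw [h]
      exact Ideal.add_mem _ h1 h2
  | mul_X p i hp =>
      obtain ⟨f, g, hfg⟩ := hp
      have hw : w b ∈ Ideal.span {w b} := Ideal.subset_span rfl
      fin_cases i
      · -- multiply by u = X 0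
        refine ⟨Polynomial.C b * Polynomial.X ^ 2 * g, f, ?_⟩
        have key : p * MvPolynomial.X 0 - lft (Polynomial.C b * Polynomial.X ^ 2 * g) f
            = (p - lft f g) * MvPolynomial.X 0
              + w b * Polynomial.aeval (MvPolynomial.X 1) g := by
          simp only [lft, w, map_mul, map_pow, Polynomial.aeval_C, Polynomial.aeval_X,
            MvPolynomial.algebraMap_eq]
          ring
        show p * MvPolynomial.X 0 - lft (Polynomial.C b * Polynomial.X ^ 2 * g) f
            ∈ Ideal.span {w b}
        rw [key]
        exact Ideal.add_mem _ (Ideal.mul_mem_right _ _ hfg) (Ideal.mul_mem_right _ _ hw)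
      · -- multiply by v = X 1
        refine ⟨f * Polynomial.X, g * Polynomial.X, ?_⟩
        have key : p * MvPolynomial.X 1 - lft (f * Polynomial.X) (g * Polynomial.X)
            = (p - lft f g) * MvPolynomial.X 1 := by
          simp only [lft, map_mul, Polynomial.aeval_X]
          ring
        show p * MvPolynomial.X 1 - lft (f * Polynomial.X) (g * Polynomial.X)
            ∈ Ideal.span {w b}
        rw [key]
        exact Ideal.mul_mem_right _ _ hfg

lemma decF (F : Polynomial (Bbar9 b)) :
    ∃ f g : B[X], ∃ c : B,
      F = rep b f g + C (algebraMap B (Bbar9 b) c * z b) := by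
  induction F using Polynomial.induction_on' with
  | add p q hp hq =>
      obtain ⟨f1, g1, c1, h1⟩ := hp
      obtain ⟨f2, g2, c2, h2⟩ := hq
      refine ⟨f1 + f2, g1 + g2, c1 + c2, ?_⟩
      rw [h1, h2]
      simp only [rep, Polynomial.map_add, map_add, Polynomial.C_add, add_mul]
      ring
  | monomial n x =>
      obtain ⟨a, c, hx⟩ := dec b x
      cases n with
      | zero =>
          refine ⟨Polynomial.C a, 0, c, ?_⟩
          rw [hx]
          simp only [rep, Polynomial.map_C, Polynomial.map_zero, mul_zero, add_zero,
            Polynomial.monomial_zero_left, Polynomial.C_add, Polynomial.C_mul]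
      | succ m =>
          refine ⟨Polynomial.monomial (m + 1) a, Polynomial.monomial m c, 0, ?_⟩
          rw [hx]
          simp only [rep, Polynomial.map_monomial, ← Polynomial.C_mul_X_pow_eq_monomial,
            pow_succ, map_zero, zero_mul, Polynomial.C_0, add_zero, Polynomial.C_add,
            Polynomial.C_mul, Polynomial.map_mul, Polynomial.map_pow, Polynomial.map_X,
            Polynomial.map_C]
          ring

end Stmt9Aux

/-- The `B`-algebra homomorphism `ψ : B[u,v]/(u²−bv²) → B̄[t]`, `u ↦ zt`, `v ↦ t`, is
injective (i.e. `ψ : B[u,v] → B̄[t]` has kernel exactly `(u² − bv²)`) and its image is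
exactly the set of polynomials `f ∈ B̄[t]` whose constant term lies in `B ⊆ B̄`. -/
theorem stmt_9 {B : Type*} [CommRing B] (b : B) :
    RingHom.ker (psi9 b) =
      Ideal.span {MvPolynomial.X 0 ^ 2 - MvPolynomial.C b * MvPolynomial.X 1 ^ 2} ∧
    Set.range (psi9 b) =
      {f : Polynomial (Bbar9 b) |
        f.coeff 0 ∈ Set.range (algebraMap B (Bbar9 b))} := by
  have hspan : Ideal.span {MvPolynomial.X 0 ^ 2 - MvPolynomial.C b * MvPolynomial.X 1 ^ 2}
      = Ideal.span {Stmt9Aux.w b} := by rw [Stmt9Aux.w]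
  have hker_le : Ideal.span {Stmt9Aux.w b} ≤ RingHom.ker (psi9 b) := by
    rw [Ideal.span_le]
    intro x hx
    rw [Set.mem_singleton_iff] at hx
    subst hx
    exact Stmt9Aux.psi_w b
  constructor
  · rw [hspan]
    apply le_antisymm
    · intro p hp
      obtain ⟨f, g, hfg⟩ := Stmt9Aux.reduce b p
      have hpl : psi9 b (p - Stmt9Aux.lft f g) = 0 := hker_le hfg
      have hp0 : psi9 b p = 0 := hp
      have hrep : Stmt9Aux.rep b f g = 0 := by
        rw [← Stmt9Aux.psi_lft]
        rw [map_sub, hp0, zero_sub, neg_eq_zero] at hpl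
        exact hpl
      obtain ⟨hf, hg⟩ := Stmt9Aux.rep_eq_zero b hrep
      have hl0 : Stmt9Aux.lft f g = (0 : MvPolynomial (Fin 2) B) := by
        simp [Stmt9Aux.lft, hf, hg]
      have hp' : p = p - Stmt9Aux.lft f g := by rw [hl0, sub_zero]
      rw [hp']
      exact hfg
    · exact hker_le
  · ext F
    constructor
    · rintro ⟨p, rfl⟩
      obtain ⟨f, g, hfg⟩ := Stmt9Aux.reduce b p
      have hps : psi9 b p = Stmt9Aux.rep b f g := by
        have hpl := hker_le hfg
        rw [RingHom.mem_ker, map_sub, sub_eq_zero] at hpl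
        rw [hpl, Stmt9Aux.psi_lft]
      rw [Set.mem_setOf_eq, hps, Stmt9Aux.rep_coeff_zero]
      exact ⟨f.coeff 0, rfl⟩
    · rintro hF
      obtain ⟨a₀, ha₀⟩ := hF
      obtain ⟨f, g, c, hFdec⟩ := Stmt9Aux.decF b F
      have hc0 : F.coeff 0 = algebraMap B (Bbar9 b) (f.coeff 0)
          + algebraMap B (Bbar9 b) c * Stmt9Aux.z b := by
        rw [hFdec]
        simp [Stmt9Aux.rep_coeff_zero]
      have key : algebraMap B (Bbar9 b) (f.coeff 0 - a₀)
          + algebraMap B (Bbar9 b) c * Stmt9Aux.z b = 0 := by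
        rw [map_sub]
        linear_combination -hc0 - ha₀
      obtain ⟨-, hc⟩ := Stmt9Aux.uniq b key
      subst hc
      have hFr : F = Stmt9Aux.rep b f g := by
        rw [hFdec]
        simp
      exact ⟨Stmt9Aux.lft f g, by rw [Stmt9Aux.psi_lft, ← hFr]⟩
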